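/- Let m and N be positive integers and let σ ∈ S_m be the standard long cycle. For every permutation α ∈ S_m one has w_{so(N)}(σ⁻¹ · α · σ) = w_{so(N)}(α), i.e., the so(N)-weight system is unchanged under the cyclic shift of a permutation. -/

import Mathlib

open scoped BigOperators

attribute [local instance 100] LieRing.ofAssociativeRing

/-- The standard generator `F i j = E_{i j} − E_{N+1−j, N+1−i}` of `so(N)`, viewed as an
`N × N` complex matrix (an element of `gl(N)`). -/
noncomputable def soF (N : ℕ) (i j : Fin N) : Matrix (Fin N) (Fin N) ℂ :=
  Matrix.single i j 1 - Matrix.single j.rev i.rev 1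

/-- The `so(N)`-weight system on a permutation `α` of `m` elements:
`w_{so(N)}(α) = ∑_{i : Fin m → Fin N} ι(F_{i 1, i (α 1)}) ⋯ ι(F_{i m, i (α m)})`,
an element of the universal enveloping algebra of `gl(N)`. -/
noncomputable def wso (m N : ℕ) (α : Equiv.Perm (Fin m)) :
    UniversalEnvelopingAlgebra ℂ (Matrix (Fin N) (Fin N) ℂ) :=
  ∑ i : Fin m → Fin N,
    ((List.finRange m).map fun k =>
      UniversalEnvelopingAlgebra.ι ℂ (soF N (i k) (i (α k)))).prod

namespace WsoAux
variable {N : ℕ}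

lemma stdE (p q r s : Fin N) (c : ℂ) :
    Matrix.single p q c r s = if p = r ∧ q = s then c else 0 := by
  simp [Matrix.single]

lemma soF_apply (p q r s : Fin N) :
    soF N p q r s = (if p = r ∧ q = s then (1:ℂ) else 0)
      - (if Fin.rev q = r ∧ Fin.rev p = s then (1:ℂ) else 0) := by
  simp [soF, Matrix.sub_apply, stdE]

lemma soF_antisym (c d a b : Fin N) :
    soF N c d (Fin.rev b) (Fin.rev a) = - soF N c d a b := by
  rw [soF_apply, soF_apply]
  have h1 : (c = Fin.rev b ∧ d = Fin.rev a) ↔ (Fin.rev d = a ∧ Fin.rev c = b) :=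
    ⟨fun ⟨h1, h2⟩ => ⟨by rw [h2, Fin.rev_rev], by rw [h1, Fin.rev_rev]⟩,
     fun ⟨h1, h2⟩ => ⟨by rw [← h2, Fin.rev_rev], by rw [← h1, Fin.rev_rev]⟩⟩
  have h2 : (Fin.rev d = Fin.rev b ∧ Fin.rev c = Fin.rev a) ↔ (c = a ∧ d = b) := by
    rw [Fin.rev_inj, Fin.rev_inj]; exact and_comm
  rw [if_congr h1 rfl rfl, if_congr h2 rfl rfl]; ring

lemma sumA (x : Matrix (Fin N) (Fin N) ℂ) (p q : Fin N) :
    ∑ e, x e p • Matrix.single e q (1:ℂ) = x * Matrix.single p q 1 := by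
  ext r s
  simp only [Matrix.sum_apply, Matrix.smul_apply, stdE, Matrix.mul_apply, smul_eq_mul,
    mul_ite, mul_one, mul_zero, ite_and]
  simp [Finset.sum_ite_eq, Finset.sum_ite_eq']

lemma sumB (x : Matrix (Fin N) (Fin N) ℂ) (p q : Fin N) :
    ∑ e, x q e • Matrix.single p e (1:ℂ) = Matrix.single p q 1 * x := by
  ext r s
  simp only [Matrix.sum_apply, Matrix.smul_apply, stdE, Matrix.mul_apply, smul_eq_mul,
    mul_ite, mul_one, mul_zero, ite_and, ite_mul, zero_mul, one_mul]
  simp [Finset.sum_ite_eq, Finset.sum_ite_eq']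

lemma brk (x : Matrix (Fin N) (Fin N) ℂ)
    (hx : ∀ a b, x (Fin.rev b) (Fin.rev a) = - x a b) (p q : Fin N) :
    x * soF N p q - soF N p q * x
      = (∑ e, x e p • soF N e q) - ∑ e, x q e • soF N p e := by
  have e1 : (∑ e, x e p • Matrix.single (Fin.rev q) (Fin.rev e) (1:ℂ))
      = - (Matrix.single (Fin.rev q) (Fin.rev p) 1 * x) := by
    rw [← sumB x (Fin.rev q) (Fin.rev p),
      ← Equiv.sum_comp Fin.revPerm
        (fun e => x e p • Matrix.single (Fin.rev q) (Fin.rev e) (1:ℂ))]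
    have key : ∀ e : Fin N, x (Fin.rev e) p = - x (Fin.rev p) e := by
      intro e
      conv_lhs => rw [← Fin.rev_rev p]
      exact hx _ _
    simp only [Fin.revPerm_apply, Fin.rev_rev, key, neg_smul]
    rw [← Finset.sum_neg_distrib]
  have e2 : (∑ e, x q e • Matrix.single (Fin.rev e) (Fin.rev p) (1:ℂ))
      = - (x * Matrix.single (Fin.rev q) (Fin.rev p) 1) := by
    rw [← sumA x (Fin.rev q) (Fin.rev p),
      ← Equiv.sum_comp Fin.revPerm
        (fun e => x q e • Matrix.single (Fin.rev e) (Fin.rev p) (1:ℂ))]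
    have key : ∀ e : Fin N, x q (Fin.rev e) = - x e (Fin.rev q) := by
      intro e
      conv_lhs => rw [← Fin.rev_rev q]
      exact hx _ _
    simp only [Fin.revPerm_apply, Fin.rev_rev, key, neg_smul]
    rw [← Finset.sum_neg_distrib]
  have h1 : (∑ e, x e p • soF N e q)
      = x * Matrix.single p q 1 + Matrix.single (Fin.rev q) (Fin.rev p) 1 * x := by
    simp only [soF, smul_sub]
    rw [Finset.sum_sub_distrib, sumA, e1, sub_neg_eq_add]
  have h2 : (∑ e, x q e • soF N p e)
      = Matrix.single p q 1 * x + x * Matrix.single (Fin.rev q) (Fin.rev p) 1 := by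
    simp only [soF, smul_sub]
    rw [Finset.sum_sub_distrib, sumB, e2, sub_neg_eq_add]
  rw [h1, h2]
  simp only [soF]
  noncomm_ring


abbrev UEA (N : ℕ) := UniversalEnvelopingAlgebra ℂ (Matrix (Fin N) (Fin N) ℂ)

noncomputable def ff (N : ℕ) (p q : Fin N) : UEA N :=
  UniversalEnvelopingAlgebra.ι ℂ (soF N p q)

variable {m : ℕ}

noncomputable def PP (m N : ℕ) (r c : Fin m → Fin N) (L : List (Fin m)) : UEA N :=
  (L.map fun k => ff N (r k) (c k)).prod

lemma PP_nil (r c : Fin m → Fin N) : PP m N r c [] = 1 := rfl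

lemma PP_cons (r c : Fin m → Fin N) (k : Fin m) (L : List (Fin m)) :
    PP m N r c (k :: L) = ff N (r k) (c k) * PP m N r c L := by
  simp [PP]

lemma PP_congr {r c r' c' : Fin m → Fin N} {L : List (Fin m)}
    (hr : ∀ k ∈ L, r k = r' k) (hc : ∀ k ∈ L, c k = c' k) :
    PP m N r c L = PP m N r' c' L := by
  unfold PP
  congr 1
  exact List.map_congr_left fun k hk => by rw [hr k hk, hc k hk]

lemma iota_comm (x y : Matrix (Fin N) (Fin N) ℂ) :
    (UniversalEnvelopingAlgebra.ι ℂ x) * (UniversalEnvelopingAlgebra.ι ℂ y)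
      - (UniversalEnvelopingAlgebra.ι ℂ y) * (UniversalEnvelopingAlgebra.ι ℂ x)
    = UniversalEnvelopingAlgebra.ι ℂ (x * y - y * x) := by
  have := (UniversalEnvelopingAlgebra.ι ℂ
    (L := Matrix (Fin N) (Fin N) ℂ)).map_lie (x := x) (y := y)
  rw [Ring.lie_def, Ring.lie_def] at this
  exact this.symm

lemma leibniz (x : Matrix (Fin N) (Fin N) ℂ)
    (hx : ∀ a b, x (Fin.rev b) (Fin.rev a) = - x a b) :
    ∀ (L : List (Fin m)), L.Nodup → ∀ (r c : Fin m → Fin N),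
    (UniversalEnvelopingAlgebra.ι ℂ x) * PP m N r c L
      - PP m N r c L * (UniversalEnvelopingAlgebra.ι ℂ x)
    = (L.map (fun k =>
        (∑ e, x e (r k) • PP m N (Function.update r k e) c L)
        - ∑ e, x (c k) e • PP m N r (Function.update c k e) L)).sum := by
  intro L
  induction L with
  | nil => intro _ r c; simp [PP_nil]
  | cons k₀ L' ih =>
    intro hnd r c
    have hk₀ : k₀ ∉ L' := (List.nodup_cons.mp hnd).1
    have hnd' : L'.Nodup := (List.nodup_cons.mp hnd).2
    have hne : ∀ k ∈ L', k ≠ k₀ := fun k hk h => hk₀ (h ▸ hk)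
    have expand : (UniversalEnvelopingAlgebra.ι ℂ x) * PP m N r c (k₀ :: L')
          - PP m N r c (k₀ :: L') * (UniversalEnvelopingAlgebra.ι ℂ x)
        = ((UniversalEnvelopingAlgebra.ι ℂ x) * ff N (r k₀) (c k₀)
            - ff N (r k₀) (c k₀) * (UniversalEnvelopingAlgebra.ι ℂ x)) * PP m N r c L'
          + ff N (r k₀) (c k₀) * ((UniversalEnvelopingAlgebra.ι ℂ x) * PP m N r c L'
            - PP m N r c L' * (UniversalEnvelopingAlgebra.ι ℂ x)) := by
      rw [PP_cons]
      noncomm_ring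
    have hb : (UniversalEnvelopingAlgebra.ι ℂ x) * ff N (r k₀) (c k₀)
          - ff N (r k₀) (c k₀) * (UniversalEnvelopingAlgebra.ι ℂ x)
        = (∑ e, x e (r k₀) • ff N e (c k₀)) - ∑ e, x (c k₀) e • ff N (r k₀) e := by
      rw [show ff N (r k₀) (c k₀)
          = UniversalEnvelopingAlgebra.ι ℂ (soF N (r k₀) (c k₀)) from rfl,
        iota_comm, brk x hx]
      rw [← LieHom.coe_toLinearMap, map_sub, map_sum, map_sum]
      simp only [map_smul, LieHom.coe_toLinearMap]
      rfl
    -- head terms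
    have headrow : ∀ e : Fin N,
        PP m N (Function.update r k₀ e) c (k₀ :: L') = ff N e (c k₀) * PP m N r c L' := by
      intro e
      rw [PP_cons, Function.update_self]
      congr 1
      exact PP_congr (fun k hk => Function.update_of_ne (hne k hk) e r) (fun _ _ => rfl)
    have headcol : ∀ e : Fin N,
        PP m N r (Function.update c k₀ e) (k₀ :: L') = ff N (r k₀) e * PP m N r c L' := by
      intro e
      rw [PP_cons, Function.update_self]
      congr 1
      exact PP_congr (fun _ _ => rfl) (fun k hk => Function.update_of_ne (hne k hk) e c)
    have tailrow : ∀ k ∈ L', ∀ e : Fin N,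
        PP m N (Function.update r k e) c (k₀ :: L')
          = ff N (r k₀) (c k₀) * PP m N (Function.update r k e) c L' := by
      intro k hk e
      rw [PP_cons, Function.update_of_ne (Ne.symm (hne k hk))]
    have tailcol : ∀ k ∈ L', ∀ e : Fin N,
        PP m N r (Function.update c k e) (k₀ :: L')
          = ff N (r k₀) (c k₀) * PP m N r (Function.update c k e) L' := by
      intro k hk e
      rw [PP_cons, Function.update_of_ne (Ne.symm (hne k hk))]
    rw [expand, hb, ih hnd' r c, List.map_cons, List.sum_cons]
    congr 1
    · -- head term
      rw [sub_mul, Finset.sum_mul, Finset.sum_mul]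
      congr 1
      · exact Finset.sum_congr rfl fun e _ => by rw [smul_mul_assoc, headrow e]
      · exact Finset.sum_congr rfl fun e _ => by rw [smul_mul_assoc, headcol e]
    · -- tail terms
      rw [← List.sum_map_mul_left]
      congr 1
      refine List.map_congr_left fun k hk => ?_
      rw [mul_sub, Finset.mul_sum, Finset.mul_sum]
      congr 1
      · exact Finset.sum_congr rfl fun e _ => by
          rw [mul_smul_comm, tailrow k hk e]
      · exact Finset.sum_congr rfl fun e _ => by
          rw [mul_smul_comm, tailcol k hk e]

lemma sum_update_swap {M : Type*} [AddCommMonoid M] (s : Fin m)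
    (g : (Fin m → Fin N) → Fin N → M) :
    (∑ i : Fin m → Fin N, ∑ e : Fin N, g (Function.update i s e) (i s))
    = ∑ i : Fin m → Fin N, ∑ e : Fin N, g i e := by
  rw [← Fintype.sum_prod_type' (f := fun i e => g (Function.update i s e) (i s)),
    ← Fintype.sum_prod_type' (f := fun i e => g i e)]
  have hinv : Function.Involutive
      (fun p : (Fin m → Fin N) × Fin N => (Function.update p.1 s p.2, p.1 s)) := by
    rintro ⟨i, e⟩
    simp [Function.update_idem, Function.update_eq_self, Function.update_self]
  exact Fintype.sum_bijective _ hinv.bijective _ _ (fun p => rfl)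

lemma update_comp (α : Equiv.Perm (Fin m)) (i : Fin m → Fin N) (s : Fin m) (e : Fin N) :
    (Function.update i s e) ∘ ⇑α = Function.update (i ∘ ⇑α) (α⁻¹ s) e := by
  funext k
  simp only [Function.comp_apply]
  rcases eq_or_ne (α k) s with h | h
  · have hk : k = α⁻¹ s := by rw [← h]; simp
    rw [h, Function.update_self, hk, Function.update_self]
  · have hk : k ≠ α⁻¹ s := fun hc => h (by rw [hc]; simp)
    rw [Function.update_of_ne h, Function.update_of_ne hk]
    rfl

/-- the list of nonzero indices of `Fin (m'+1)` -/
def cs (m' : ℕ) : List (Fin (m' + 1)) := (List.finRange m').map Fin.succ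

lemma cs_nodup (m' : ℕ) : (cs m').Nodup :=
  (List.nodup_finRange m').map (Fin.succ_injective m')

lemma zero_not_mem_cs (m' : ℕ) : (0 : Fin (m' + 1)) ∉ cs m' := by
  simp only [cs, List.mem_map]
  rintro ⟨k, _, hk⟩
  exact Fin.succ_ne_zero k hk

variable {m' : ℕ}

noncomputable def Th (m' N : ℕ) (α : Equiv.Perm (Fin (m' + 1))) (a b : Fin N) : UEA N :=
  ∑ i : Fin (m' + 1) → Fin N, soF N (i 0) (i (α 0)) a b • PP (m' + 1) N i (i ∘ ⇑α) (cs m')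

noncomputable def QQ (m' N : ℕ) (a b : Fin N) (r c' : Fin (m' + 1) → Fin N) : UEA N :=
  soF N (r 0) (c' 0) a b • PP (m' + 1) N r c' (cs m')

noncomputable def Row (m' N : ℕ) (α : Equiv.Perm (Fin (m' + 1))) (a b c d : Fin N)
    (s : Fin (m' + 1)) : UEA N :=
  ∑ i : Fin (m' + 1) → Fin N, ∑ e : Fin N,
    soF N c d e (i s) • QQ m' N a b (Function.update i s e) (i ∘ ⇑α)

noncomputable def Col (m' N : ℕ) (α : Equiv.Perm (Fin (m' + 1))) (a b c d : Fin N)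
    (s : Fin (m' + 1)) : UEA N :=
  ∑ i : Fin (m' + 1) → Fin N, ∑ e : Fin N,
    soF N c d (i (α s)) e • QQ m' N a b i (Function.update (i ∘ ⇑α) s e)

lemma row_eq_col (α : Equiv.Perm (Fin (m' + 1))) (a b c d : Fin N) (s : Fin (m' + 1)) :
    Row m' N α a b c d s = Col m' N α a b c d (α⁻¹ s) := by
  have step1 : Row m' N α a b c d s
      = ∑ i : Fin (m' + 1) → Fin N, ∑ e : Fin N,
          soF N c d (i s) e • QQ m' N a b i ((Function.update i s e) ∘ ⇑α) := by
    rw [← sum_update_swap s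
      (fun j o => soF N c d (j s) o • QQ m' N a b j ((Function.update j s o) ∘ ⇑α))]
    unfold Row
    apply Finset.sum_congr rfl; intro i _
    apply Finset.sum_congr rfl; intro e _
    simp only [Function.update_self, Function.update_idem, Function.update_eq_self]
  rw [step1]
  unfold Col
  apply Finset.sum_congr rfl; intro i _
  apply Finset.sum_congr rfl; intro e _
  rw [show α (α⁻¹ s) = s from α.apply_symm_apply s, update_comp]

lemma bracket_eq (α : Equiv.Perm (Fin (m' + 1))) (a b c d : Fin N) :
    (UniversalEnvelopingAlgebra.ι ℂ (soF N c d)) * Th m' N α a b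
      - Th m' N α a b * (UniversalEnvelopingAlgebra.ι ℂ (soF N c d))
    = ∑ k : Fin m', (Row m' N α a b c d k.succ - Col m' N α a b c d k.succ) := by
  have hx : ∀ a b, soF N c d (Fin.rev b) (Fin.rev a) = - soF N c d a b :=
    fun a b => soF_antisym c d a b
  have step1 : (UniversalEnvelopingAlgebra.ι ℂ (soF N c d)) * Th m' N α a b
      - Th m' N α a b * (UniversalEnvelopingAlgebra.ι ℂ (soF N c d))
    = ∑ i : Fin (m' + 1) → Fin N, ∑ k : Fin m',
        ((∑ e, soF N c d e (i k.succ) •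
            QQ m' N a b (Function.update i k.succ e) (i ∘ ⇑α))
         - ∑ e, soF N c d ((i ∘ ⇑α) k.succ) e •
            QQ m' N a b i (Function.update (i ∘ ⇑α) k.succ e)) := by
    unfold Th
    rw [Finset.mul_sum, Finset.sum_mul, ← Finset.sum_sub_distrib]
    refine Finset.sum_congr rfl fun i _ => ?_
    rw [mul_smul_comm, smul_mul_assoc, ← smul_sub,
      leibniz (soF N c d) hx (cs m') (cs_nodup m') i (i ∘ ⇑α)]
    have hlist : ((cs m').map (fun k =>
        (∑ e, soF N c d e (i k) •
          PP (m' + 1) N (Function.update i k e) (i ∘ ⇑α) (cs m'))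
        - ∑ e, soF N c d ((i ∘ ⇑α) k) e •
          PP (m' + 1) N i (Function.update (i ∘ ⇑α) k e) (cs m'))).sum
      = ∑ k : Fin m',
        ((∑ e, soF N c d e (i k.succ) •
            PP (m' + 1) N (Function.update i k.succ e) (i ∘ ⇑α) (cs m'))
         - ∑ e, soF N c d ((i ∘ ⇑α) k.succ) e •
            PP (m' + 1) N i (Function.update (i ∘ ⇑α) k.succ e) (cs m')) := by
      rw [cs, List.map_map, ← Fin.sum_univ_def]
      rfl
    rw [hlist, Finset.smul_sum]
    refine Finset.sum_congr rfl fun k _ => ?_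
    have h0 : (0 : Fin (m' + 1)) ≠ k.succ := (Fin.succ_ne_zero k).symm
    rw [smul_sub]
    congr 1
    · rw [Finset.smul_sum]
      refine Finset.sum_congr rfl fun e _ => ?_
      unfold QQ
      rw [Function.update_of_ne h0]
      simp only [Function.comp_apply]
      rw [smul_comm]
    · rw [Finset.smul_sum]
      refine Finset.sum_congr rfl fun e _ => ?_
      unfold QQ
      rw [Function.update_of_ne h0]
      simp only [Function.comp_apply]
      rw [smul_comm]
  rw [step1, Finset.sum_comm]
  refine Finset.sum_congr rfl fun k _ => ?_
  rw [Finset.sum_sub_distrib]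
  rfl

lemma row0_sub_col0 (α : Equiv.Perm (Fin (m' + 1))) (a b c d : Fin N) :
    Row m' N α a b c d 0 - Col m' N α a b c d 0
    = (∑ e, soF N c d a e • Th m' N α e b) - ∑ e, soF N c d e b • Th m' N α a e := by
  have hx : ∀ a b, soF N c d (Fin.rev b) (Fin.rev a) = - soF N c d a b :=
    fun a b => soF_antisym c d a b
  have hPPr : ∀ (i : Fin (m' + 1) → Fin N) (e : Fin N),
      PP (m' + 1) N (Function.update i 0 e) (i ∘ ⇑α) (cs m')
        = PP (m' + 1) N i (i ∘ ⇑α) (cs m') :=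
    fun i e => PP_congr
      (fun k hk => Function.update_of_ne (fun (h : k = 0) => zero_not_mem_cs m' (by rw [← h]; exact hk)) e i)
      (fun _ _ => rfl)
  have hPPc : ∀ (i : Fin (m' + 1) → Fin N) (e : Fin N),
      PP (m' + 1) N i (Function.update (i ∘ ⇑α) 0 e) (cs m')
        = PP (m' + 1) N i (i ∘ ⇑α) (cs m') :=
    fun i e => PP_congr (fun _ _ => rfl)
      (fun k hk => Function.update_of_ne (fun (h : k = 0) => zero_not_mem_cs m' (by rw [← h]; exact hk)) e (i ∘ ⇑α))
  have hrow : Row m' N α a b c d 0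
      = ∑ i : Fin (m' + 1) → Fin N,
          (∑ e, soF N c d e (i 0) * soF N e (i (α 0)) a b)
            • PP (m' + 1) N i (i ∘ ⇑α) (cs m') := by
    unfold Row QQ
    refine Finset.sum_congr rfl fun i _ => ?_
    rw [Finset.sum_smul]
    refine Finset.sum_congr rfl fun e _ => ?_
    rw [Function.update_self, hPPr i e, smul_smul]
    try simp only [Function.comp_apply]
  have hcol : Col m' N α a b c d 0
      = ∑ i : Fin (m' + 1) → Fin N,
          (∑ e, soF N c d (i (α 0)) e * soF N (i 0) e a b)
            • PP (m' + 1) N i (i ∘ ⇑α) (cs m') := by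
    unfold Col QQ
    refine Finset.sum_congr rfl fun i _ => ?_
    rw [Finset.sum_smul]
    refine Finset.sum_congr rfl fun e _ => ?_
    rw [Function.update_self, hPPc i e, smul_smul]
    try simp only [Function.comp_apply]
  have hrhs1 : (∑ e, soF N c d a e • Th m' N α e b)
      = ∑ i : Fin (m' + 1) → Fin N,
          (∑ e, soF N c d a e * soF N (i 0) (i (α 0)) e b)
            • PP (m' + 1) N i (i ∘ ⇑α) (cs m') := by
    unfold Th
    simp only [Finset.smul_sum]
    rw [Finset.sum_comm]
    refine Finset.sum_congr rfl fun i _ => ?_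
    rw [Finset.sum_smul]
    refine Finset.sum_congr rfl fun e _ => ?_
    rw [smul_smul]
  have hrhs2 : (∑ e, soF N c d e b • Th m' N α a e)
      = ∑ i : Fin (m' + 1) → Fin N,
          (∑ e, soF N (i 0) (i (α 0)) a e * soF N c d e b)
            • PP (m' + 1) N i (i ∘ ⇑α) (cs m') := by
    unfold Th
    simp only [Finset.smul_sum]
    rw [Finset.sum_comm]
    refine Finset.sum_congr rfl fun i _ => ?_
    rw [Finset.sum_smul]
    refine Finset.sum_congr rfl fun e _ => ?_
    rw [smul_smul, mul_comm]
  rw [hrow, hcol, hrhs1, hrhs2, ← Finset.sum_sub_distrib, ← Finset.sum_sub_distrib]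
  refine Finset.sum_congr rfl fun i _ => ?_
  rw [← sub_smul, ← sub_smul]
  congr 1
  have h := congrArg (fun M : Matrix (Fin N) (Fin N) ℂ => M a b)
    (brk (soF N c d) hx (i 0) (i (α 0)))
  simp only [Matrix.sub_apply, Matrix.sum_apply, Matrix.smul_apply, smul_eq_mul,
    Matrix.mul_apply] at h
  linear_combination -h

lemma inv5 (α : Equiv.Perm (Fin (m' + 1))) (a b c d : Fin N) :
    (UniversalEnvelopingAlgebra.ι ℂ (soF N c d)) * Th m' N α a b
      - Th m' N α a b * (UniversalEnvelopingAlgebra.ι ℂ (soF N c d))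
    = (∑ e, soF N c d e b • Th m' N α a e) - ∑ e, soF N c d a e • Th m' N α e b := by
  have hsum : ∑ s : Fin (m' + 1), (Row m' N α a b c d s - Col m' N α a b c d s) = 0 := by
    rw [Finset.sum_sub_distrib, sub_eq_zero]
    calc ∑ s, Row m' N α a b c d s = ∑ s, Col m' N α a b c d (α⁻¹ s) :=
          Finset.sum_congr rfl (fun s _ => row_eq_col α a b c d s)
      _ = ∑ s, Col m' N α a b c d s := Equiv.sum_comp α.symm (Col m' N α a b c d)
  rw [Fin.sum_univ_succ] at hsum
  rw [bracket_eq α a b c d,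
    eq_neg_of_add_eq_zero_right hsum, row0_sub_col0 α a b c d, neg_sub]

lemma iota_expand (x : Matrix (Fin N) (Fin N) ℂ) :
    UniversalEnvelopingAlgebra.ι ℂ x
      = ∑ a, ∑ b, x a b • UniversalEnvelopingAlgebra.ι ℂ (Matrix.single a b (1:ℂ)) := by
  conv_lhs => rw [Matrix.matrix_eq_sum_single x]
  rw [← LieHom.coe_toLinearMap, map_sum]
  refine Finset.sum_congr rfl fun a _ => ?_
  rw [map_sum]
  refine Finset.sum_congr rfl fun b _ => ?_
  rw [show Matrix.single a b (x a b) = x a b • Matrix.single a b 1 by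
    rw [Matrix.smul_single, smul_eq_mul, mul_one], map_smul]

lemma Th_antisym (α : Equiv.Perm (Fin (m' + 1))) (a b : Fin N) :
    Th m' N α (Fin.rev b) (Fin.rev a) = - Th m' N α a b := by
  unfold Th
  rw [← Finset.sum_neg_distrib]
  refine Finset.sum_congr rfl fun i _ => ?_
  rw [soF_antisym, neg_smul]

lemma delta_eq (α : Equiv.Perm (Fin (m' + 1))) :
    (∑ i : Fin (m' + 1) → Fin N,
      (ff N (i 0) (i (α 0)) * PP (m' + 1) N i (i ∘ ⇑α) (cs m')
        - PP (m' + 1) N i (i ∘ ⇑α) (cs m') * ff N (i 0) (i (α 0))))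
    = ∑ a, ∑ b,
        ((UniversalEnvelopingAlgebra.ι ℂ (Matrix.single a b (1:ℂ))) * Th m' N α a b
          - Th m' N α a b * UniversalEnvelopingAlgebra.ι ℂ (Matrix.single a b (1:ℂ))) := by
  have step1 : ∀ i : Fin (m' + 1) → Fin N,
      ff N (i 0) (i (α 0)) * PP (m' + 1) N i (i ∘ ⇑α) (cs m')
        - PP (m' + 1) N i (i ∘ ⇑α) (cs m') * ff N (i 0) (i (α 0))
      = ∑ a, ∑ b, soF N (i 0) (i (α 0)) a b •
          ((UniversalEnvelopingAlgebra.ι ℂ (Matrix.single a b (1:ℂ)))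
              * PP (m' + 1) N i (i ∘ ⇑α) (cs m')
            - PP (m' + 1) N i (i ∘ ⇑α) (cs m')
              * UniversalEnvelopingAlgebra.ι ℂ (Matrix.single a b (1:ℂ))) := by
    intro i
    rw [show ff N (i 0) (i (α 0))
        = UniversalEnvelopingAlgebra.ι ℂ (soF N (i 0) (i (α 0))) from rfl,
      iota_expand (soF N (i 0) (i (α 0))), Finset.sum_mul, Finset.mul_sum,
      ← Finset.sum_sub_distrib]
    refine Finset.sum_congr rfl fun a _ => ?_
    rw [Finset.sum_mul, Finset.mul_sum, ← Finset.sum_sub_distrib]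
    refine Finset.sum_congr rfl fun b _ => ?_
    rw [smul_mul_assoc, mul_smul_comm, ← smul_sub]
  calc (∑ i : Fin (m' + 1) → Fin N,
      (ff N (i 0) (i (α 0)) * PP (m' + 1) N i (i ∘ ⇑α) (cs m')
        - PP (m' + 1) N i (i ∘ ⇑α) (cs m') * ff N (i 0) (i (α 0))))
      = ∑ i : Fin (m' + 1) → Fin N, ∑ a, ∑ b, soF N (i 0) (i (α 0)) a b •
          ((UniversalEnvelopingAlgebra.ι ℂ (Matrix.single a b (1:ℂ)))
              * PP (m' + 1) N i (i ∘ ⇑α) (cs m')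
            - PP (m' + 1) N i (i ∘ ⇑α) (cs m')
              * UniversalEnvelopingAlgebra.ι ℂ (Matrix.single a b (1:ℂ))) :=
        Finset.sum_congr rfl fun i _ => step1 i
    _ = ∑ a, ∑ b, ∑ i : Fin (m' + 1) → Fin N, soF N (i 0) (i (α 0)) a b •
          ((UniversalEnvelopingAlgebra.ι ℂ (Matrix.single a b (1:ℂ)))
              * PP (m' + 1) N i (i ∘ ⇑α) (cs m')
            - PP (m' + 1) N i (i ∘ ⇑α) (cs m')
              * UniversalEnvelopingAlgebra.ι ℂ (Matrix.single a b (1:ℂ))) := by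
        rw [Finset.sum_comm]
        exact Finset.sum_congr rfl fun a _ => Finset.sum_comm
    _ = ∑ a, ∑ b,
        ((UniversalEnvelopingAlgebra.ι ℂ (Matrix.single a b (1:ℂ))) * Th m' N α a b
          - Th m' N α a b * UniversalEnvelopingAlgebra.ι ℂ (Matrix.single a b (1:ℂ))) := by
        refine Finset.sum_congr rfl fun a _ => Finset.sum_congr rfl fun b _ => ?_
        unfold Th
        rw [Finset.mul_sum, Finset.sum_mul, ← Finset.sum_sub_distrib]
        refine Finset.sum_congr rfl fun i _ => ?_
        rw [smul_sub, mul_smul_comm, smul_mul_assoc]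

lemma s6 (α : Equiv.Perm (Fin (m' + 1))) :
    (∑ a : Fin N, ∑ b : Fin N,
      ((∑ e, soF N a b e b • Th m' N α a e) - ∑ e, soF N a b a e • Th m' N α e b)) = 0 := by
  have hscal1 : ∀ b e : Fin N, (∑ a, soF N a b a e) = ((N : ℂ) - 1) * (if b = e then 1 else 0) := by
    intro b e
    simp only [soF_apply, eq_self_iff_true, true_and, ite_and, Finset.sum_sub_distrib,
      Finset.sum_ite_eq, Finset.mem_univ, if_true, Fin.rev_rev, Finset.sum_const,
      Finset.card_univ, Fintype.card_fin, nsmul_eq_mul]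
    split_ifs <;> ring
  have hscal2 : ∀ a e : Fin N, (∑ b, soF N a b e b) = ((N : ℂ) - 1) * (if a = e then 1 else 0) := by
    intro a e
    simp only [soF_apply, eq_self_iff_true, and_true, ite_and, Finset.sum_sub_distrib,
      Fin.rev_eq_iff, Finset.sum_ite_eq', Finset.mem_univ, if_true, Fin.rev_rev,
      Finset.sum_const, Finset.card_univ, Fintype.card_fin, nsmul_eq_mul, Fin.rev_inj]
    split_ifs <;> ring
  have collapse : ∀ (v : Fin N → UEA N) (a : Fin N),
      (∑ e, (((N:ℂ) - 1) * (if a = e then 1 else 0)) • v e) = ((N:ℂ) - 1) • v a := by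
    intro v a
    simp only [mul_smul, ite_smul, one_smul, zero_smul, smul_ite, smul_zero,
      Finset.sum_ite_eq, Finset.mem_univ, if_true]
  have hT2 : (∑ a : Fin N, ∑ b : Fin N, ∑ e, soF N a b e b • Th m' N α a e)
      = ((N:ℂ) - 1) • ∑ a, Th m' N α a a := by
    have h1 : ∀ a : Fin N, (∑ b : Fin N, ∑ e, soF N a b e b • Th m' N α a e)
        = ∑ e, (∑ b, soF N a b e b) • Th m' N α a e := by
      intro a
      rw [Finset.sum_comm]
      exact Finset.sum_congr rfl fun e _ => Finset.sum_smul.symm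
    calc (∑ a : Fin N, ∑ b : Fin N, ∑ e, soF N a b e b • Th m' N α a e)
        = ∑ a : Fin N, ∑ e, (((N:ℂ) - 1) * (if a = e then 1 else 0)) • Th m' N α a e := by
          refine Finset.sum_congr rfl fun a _ => ?_
          rw [h1 a]
          exact Finset.sum_congr rfl fun e _ => by rw [hscal2 a e]
      _ = ∑ a : Fin N, ((N:ℂ) - 1) • Th m' N α a a :=
          Finset.sum_congr rfl fun a _ => collapse (fun e => Th m' N α a e) a
      _ = ((N:ℂ) - 1) • ∑ a, Th m' N α a a := Finset.smul_sum.symm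
  have hT1 : (∑ a : Fin N, ∑ b : Fin N, ∑ e, soF N a b a e • Th m' N α e b)
      = ((N:ℂ) - 1) • ∑ a, Th m' N α a a := by
    have h1 : (∑ a : Fin N, ∑ b : Fin N, ∑ e, soF N a b a e • Th m' N α e b)
        = ∑ b : Fin N, ∑ e, (∑ a, soF N a b a e) • Th m' N α e b := by
      rw [Finset.sum_comm]
      refine Finset.sum_congr rfl fun b _ => ?_
      rw [Finset.sum_comm]
      exact Finset.sum_congr rfl fun e _ => Finset.sum_smul.symm
    calc (∑ a : Fin N, ∑ b : Fin N, ∑ e, soF N a b a e • Th m' N α e b)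
        = ∑ b : Fin N, ∑ e, (((N:ℂ) - 1) * (if b = e then 1 else 0)) • Th m' N α e b := by
          rw [h1]
          exact Finset.sum_congr rfl fun b _ =>
            Finset.sum_congr rfl fun e _ => by rw [hscal1 b e]
      _ = ∑ b : Fin N, ((N:ℂ) - 1) • Th m' N α b b := by
          refine Finset.sum_congr rfl fun b _ => ?_
          have := collapse (fun e => Th m' N α e b) b
          simpa using this
      _ = ((N:ℂ) - 1) • ∑ a, Th m' N α a a := Finset.smul_sum.symm
  simp only [Finset.sum_sub_distrib]
  rw [hT2, hT1, sub_self]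

lemma delta_zero (α : Equiv.Perm (Fin (m' + 1))) :
    (∑ a : Fin N, ∑ b : Fin N,
      ((UniversalEnvelopingAlgebra.ι ℂ (Matrix.single a b (1:ℂ))) * Th m' N α a b
        - Th m' N α a b * UniversalEnvelopingAlgebra.ι ℂ (Matrix.single a b (1:ℂ))))
    = 0 := by
  set Dfun : Fin N × Fin N → UEA N := fun p =>
    (UniversalEnvelopingAlgebra.ι ℂ (Matrix.single p.1 p.2 (1:ℂ))) * Th m' N α p.1 p.2
      - Th m' N α p.1 p.2
        * UniversalEnvelopingAlgebra.ι ℂ (Matrix.single p.1 p.2 (1:ℂ)) with hDfun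
  have hD : (∑ a : Fin N, ∑ b : Fin N,
      ((UniversalEnvelopingAlgebra.ι ℂ (Matrix.single a b (1:ℂ))) * Th m' N α a b
        - Th m' N α a b * UniversalEnvelopingAlgebra.ι ℂ (Matrix.single a b (1:ℂ))))
      = ∑ p : Fin N × Fin N, Dfun p := by
    rw [Fintype.sum_prod_type]
  have hinv : Function.Involutive (fun p : Fin N × Fin N => ((Fin.rev p.2, Fin.rev p.1) : Fin N × Fin N)) := by
    rintro ⟨a, b⟩
    simp [Fin.rev_rev]
  have hswap : (∑ p : Fin N × Fin N, Dfun p)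
      = ∑ p : Fin N × Fin N, Dfun (Fin.rev p.2, Fin.rev p.1) :=
    (Fintype.sum_bijective _ hinv.bijective _ _ (fun p => rfl)).symm
  have hiota : ∀ p : Fin N × Fin N,
      UniversalEnvelopingAlgebra.ι ℂ (soF N p.1 p.2)
        = UniversalEnvelopingAlgebra.ι ℂ (Matrix.single p.1 p.2 (1:ℂ))
          - UniversalEnvelopingAlgebra.ι ℂ
              (Matrix.single (Fin.rev p.2) (Fin.rev p.1) (1:ℂ)) := by
    intro p
    rw [← LieHom.coe_toLinearMap, ← map_sub]
    rfl
  have key : (2:ℂ) • (∑ p : Fin N × Fin N, Dfun p) = 0 := by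
    rw [two_smul]
    calc (∑ p : Fin N × Fin N, Dfun p) + ∑ p : Fin N × Fin N, Dfun p
        = ∑ p : Fin N × Fin N, Dfun p
            + ∑ p : Fin N × Fin N, Dfun (Fin.rev p.2, Fin.rev p.1) := by rw [← hswap]
      _ = ∑ p : Fin N × Fin N, (Dfun p + Dfun (Fin.rev p.2, Fin.rev p.1)) :=
          Finset.sum_add_distrib.symm
      _ = ∑ p : Fin N × Fin N,
            ((UniversalEnvelopingAlgebra.ι ℂ (soF N p.1 p.2)) * Th m' N α p.1 p.2
              - Th m' N α p.1 p.2 * UniversalEnvelopingAlgebra.ι ℂ (soF N p.1 p.2)) := by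
          refine Finset.sum_congr rfl fun p _ => ?_
          simp only [hDfun]
          rw [Th_antisym α p.1 p.2, hiota p]
          noncomm_ring
      _ = ∑ p : Fin N × Fin N,
            ((∑ e, soF N p.1 p.2 e p.2 • Th m' N α p.1 e)
              - ∑ e, soF N p.1 p.2 p.1 e • Th m' N α e p.2) :=
          Finset.sum_congr rfl fun p _ => inv5 α p.1 p.2 p.1 p.2
      _ = ∑ a : Fin N, ∑ b : Fin N,
            ((∑ e, soF N a b e b • Th m' N α a e) - ∑ e, soF N a b a e • Th m' N α e b) := by
          rw [Fintype.sum_prod_type]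
      _ = 0 := s6 α
  rw [hD]
  exact (smul_eq_zero.mp key).resolve_left two_ne_zero

lemma rot_list (m' : ℕ) :
    (List.finRange (m' + 1)).map (⇑(finRotate (m' + 1))) = cs m' ++ [(0 : Fin (m' + 1))] := by
  apply List.ext_getElem
  · simp [cs]
  · intro t h1 h2
    have hlen : t < m' + 1 := by simpa using h1
    simp only [List.getElem_map, List.getElem_finRange, finRotate_succ_apply]
    rcases Nat.lt_or_ge t m' with ht | ht
    · rw [List.getElem_append_left (by simpa [cs] using ht)]
      simp only [cs, List.getElem_map, List.getElem_finRange]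
      apply Fin.ext
      rw [Fin.val_add_one, if_neg (by simp [Fin.ext_iff]; omega)]
      simp
    · have htm : t = m' := by omega
      subst htm
      rw [List.getElem_append_right (by simp [cs])]
      apply Fin.ext
      rw [Fin.val_add_one, if_pos (by simp [Fin.ext_iff])]
      simp [cs]

lemma wso_eq_sum_PP (m' N : ℕ) (α : Equiv.Perm (Fin (m' + 1))) :
    wso (m' + 1) N α = ∑ i : Fin (m' + 1) → Fin N,
      ff N (i 0) (i (α 0)) * PP (m' + 1) N i (i ∘ ⇑α) (cs m') := by
  unfold wso
  refine Finset.sum_congr rfl fun i _ => ?_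
  rw [List.finRange_succ, List.map_cons, List.prod_cons]
  rfl

lemma wso_conj_eq (m' N : ℕ) (α : Equiv.Perm (Fin (m' + 1))) :
    wso (m' + 1) N ((finRotate (m' + 1))⁻¹ * α * finRotate (m' + 1))
      = ∑ i : Fin (m' + 1) → Fin N,
        PP (m' + 1) N i (i ∘ ⇑α) (cs m') * ff N (i 0) (i (α 0)) := by
  unfold wso
  refine (Fintype.sum_bijective
    (fun i : Fin (m' + 1) → Fin N => i ∘ ⇑(finRotate (m' + 1))) ?_ _ _ ?_).symm
  · constructor
    · intro i j h
      funext k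
      have := congrFun h ((finRotate (m' + 1)).symm k)
      simpa [Function.comp, Equiv.apply_symm_apply] using this
    · intro j
      refine ⟨j ∘ ⇑(finRotate (m' + 1)).symm, ?_⟩
      funext k
      simp only [Function.comp_apply, Equiv.symm_apply_apply]
  · intro i
    have hβ : ∀ k, (i ∘ ⇑(finRotate (m' + 1)))
        (((finRotate (m' + 1))⁻¹ * α * finRotate (m' + 1)) k) = i (α (finRotate (m' + 1) k)) := by
      intro k
      simp only [Function.comp_apply, Equiv.Perm.mul_apply, Equiv.Perm.coe_inv, Equiv.apply_symm_apply]
    calc PP (m' + 1) N i (i ∘ ⇑α) (cs m') * ff N (i 0) (i (α 0))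
        = ((List.finRange (m' + 1)).map
            (fun k => ff N (i (finRotate (m' + 1) k)) (i (α (finRotate (m' + 1) k))))).prod := by
          rw [show (List.finRange (m' + 1)).map
              (fun k => ff N (i (finRotate (m' + 1) k)) (i (α (finRotate (m' + 1) k))))
              = ((List.finRange (m' + 1)).map ⇑(finRotate (m' + 1))).map
                  (fun k => ff N (i k) (i (α k))) from by rw [List.map_map]; rfl,
            rot_list m', List.map_append, List.prod_append]
          simp only [List.map_cons, List.map_nil, List.prod_cons, List.prod_nil, mul_one]
          rfl
      _ = ((List.finRange (m' + 1)).map (fun k =>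
            UniversalEnvelopingAlgebra.ι ℂ
              (soF N ((i ∘ ⇑(finRotate (m' + 1))) k)
                ((i ∘ ⇑(finRotate (m' + 1)))
                  (((finRotate (m' + 1))⁻¹ * α * finRotate (m' + 1)) k))))).prod := by
          congr 1
          refine List.map_congr_left fun k _ => ?_
          rw [hβ k]
          rfl

end WsoAux

/-- The `so(N)`-weight system is unchanged under the cyclic shift of a permutation:
`w_{so(N)}(σ⁻¹ α σ) = w_{so(N)}(α)`, where `σ = finRotate m` is the standard long cycle. -/
theorem wso_conj_finRotate (m N : ℕ) (hm : 0 < m) (hN : 0 < N) (α : Equiv.Perm (Fin m)) :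
    wso m N ((finRotate m)⁻¹ * α * finRotate m) = wso m N α := by
  obtain ⟨m', rfl⟩ : ∃ m', m = m' + 1 := ⟨m - 1, by omega⟩
  rw [WsoAux.wso_conj_eq m' N α, WsoAux.wso_eq_sum_PP m' N α]
  have h0 : (∑ i : Fin (m' + 1) → Fin N,
      (WsoAux.ff N (i 0) (i (α 0)) * WsoAux.PP (m' + 1) N i (i ∘ ⇑α) (WsoAux.cs m')
        - WsoAux.PP (m' + 1) N i (i ∘ ⇑α) (WsoAux.cs m') * WsoAux.ff N (i 0) (i (α 0)))) = 0 :=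
    (WsoAux.delta_eq α).trans (WsoAux.delta_zero α)
  rw [Finset.sum_sub_distrib] at h0
  exact (sub_eq_zero.mp h0).symm
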